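/- Let σ be a finite composition of substitutions from S = {τ_h : h ≥ 0}, let u_0 u_1 u_2 … = σ(1^ω), and let m > 1. Then there is a unique real number g_σ(m) > 1 satisfying m/(g_σ(m)−1) = 1 + Σ_{k≥0} u_k g_σ(m)^{-(k+1)}, and the function m ↦ g_σ(m) is strictly increasing. -/

import Mathlib

def tauL (h : ℕ) (b : Bool) : List Bool :=
  if b then List.replicate h false ++ [true] else List.replicate (h + 1) false ++ [true]

def joinW (f : ℕ → List Bool) : ℕ → Bool :=
  fun n => (((List.range (n + 1)).map f).flatten).getD n false

def applyTau (h : ℕ) (u : ℕ → Bool) : ℕ → Bool :=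
  joinW fun n => tauL h (u n)

def applyComp (hs : List ℕ) (u : ℕ → Bool) : ℕ → Bool :=
  hs.foldr applyTau u

/-- The word 1^ω. -/
def onesW : ℕ → Bool := fun _ => true

/- ## Auxiliary development.
The statement in fact holds for an arbitrary 0/1 word `u`.  Writing
`S x = Σ u_k x^{-(k+1)}` and `F x = (x-1)(1+S x)`, the key estimate is
`(S x - S y) * ((x-1)(y-1)) ≤ y - x` for `1 < x < y`, obtained by comparing with
the full geometric series.  It implies `(F y - F x)(x-1) ≥ (y-x)(F x - 1)`,
from which uniqueness of solutions of `F x = m` (for `m > 1`) and monotonicity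
follow; existence is the intermediate value theorem. -/

noncomputable def Sw (u : ℕ → Bool) (x : ℝ) : ℝ :=
  ∑' k : ℕ, (if u k then (1:ℝ) else 0) / x ^ (k + 1)

lemma geom_summable {x : ℝ} (hx : 1 < x) : Summable (fun k : ℕ => x⁻¹ * x⁻¹ ^ k) :=
  (summable_geometric_of_lt_one (by positivity) (inv_lt_one_of_one_lt₀ hx)).mul_left _

lemma geom_tsum {x : ℝ} (hx : 1 < x) : ∑' k : ℕ, x⁻¹ * x⁻¹ ^ k = 1 / (x - 1) := by
  rw [tsum_mul_left, tsum_geometric_of_lt_one (by positivity) (inv_lt_one_of_one_lt₀ hx)]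
  have hx0 : x ≠ 0 := by positivity
  have hx1 : x - 1 ≠ 0 := by intro h; nlinarith
  field_simp

lemma term_nonneg (u : ℕ → Bool) {x : ℝ} (hx : 1 < x) (k : ℕ) :
    0 ≤ (if u k then (1:ℝ) else 0) / x ^ (k + 1) := by
  apply div_nonneg _ (by positivity)
  split_ifs <;> norm_num

lemma inv_mul_pow {x : ℝ} (hx : 1 < x) (k : ℕ) : x⁻¹ * x⁻¹ ^ k = 1 / x ^ (k + 1) := by
  have hx0 : x ≠ 0 := by positivity
  rw [← pow_succ']
  field_simp
  rw [one_div_pow, one_div_mul_cancel (pow_ne_zero _ hx0)]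

lemma term_le (u : ℕ → Bool) {x : ℝ} (hx : 1 < x) (k : ℕ) :
    (if u k then (1:ℝ) else 0) / x ^ (k + 1) ≤ x⁻¹ * x⁻¹ ^ k := by
  rw [inv_mul_pow hx]
  gcongr
  · split_ifs <;> norm_num

lemma Sw_summable (u : ℕ → Bool) {x : ℝ} (hx : 1 < x) :
    Summable (fun k : ℕ => (if u k then (1:ℝ) else 0) / x ^ (k + 1)) :=
  Summable.of_nonneg_of_le (term_nonneg u hx) (term_le u hx) (geom_summable hx)

lemma Sw_nonneg (u : ℕ → Bool) {x : ℝ} (hx : 1 < x) : 0 ≤ Sw u x :=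
  tsum_nonneg (term_nonneg u hx)

lemma Sw_le (u : ℕ → Bool) {x : ℝ} (hx : 1 < x) : Sw u x ≤ 1 / (x - 1) := by
  rw [← geom_tsum hx]
  exact Summable.tsum_le_tsum (term_le u hx) (Sw_summable u hx) (geom_summable hx)

lemma Sw_anti (u : ℕ → Bool) {x y : ℝ} (hx : 1 < x) (hxy : x < y) : Sw u y ≤ Sw u x := by
  have hy : 1 < y := hx.trans hxy
  apply Summable.tsum_le_tsum _ (Sw_summable u hy) (Sw_summable u hx)
  intro k
  have hA : (0:ℝ) < x ^ (k+1) := by positivity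
  have hAB : x ^ (k+1) ≤ y ^ (k+1) := pow_le_pow_left₀ (by linarith) hxy.le _
  have h1 : 1 / y ^ (k+1) ≤ 1 / x ^ (k+1) := one_div_le_one_div_of_le hA hAB
  have hc0 : (0:ℝ) ≤ (if u k then (1:ℝ) else 0) := by split_ifs <;> norm_num
  calc (if u k then (1:ℝ) else 0) / y ^ (k+1)
      = (if u k then (1:ℝ) else 0) * (1 / y ^ (k+1)) := by ring
    _ ≤ (if u k then (1:ℝ) else 0) * (1 / x ^ (k+1)) := mul_le_mul_of_nonneg_left h1 hc0
    _ = (if u k then (1:ℝ) else 0) / x ^ (k+1) := by ring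

lemma Sw_diff_le (u : ℕ → Bool) {x y : ℝ} (hx : 1 < x) (hxy : x < y) :
    Sw u x - Sw u y ≤ 1 / (x - 1) - 1 / (y - 1) := by
  have hy : 1 < y := hx.trans hxy
  unfold Sw
  rw [← Summable.tsum_sub (Sw_summable u hx) (Sw_summable u hy),
      ← geom_tsum hx, ← geom_tsum hy,
      ← Summable.tsum_sub (geom_summable hx) (geom_summable hy)]
  apply Summable.tsum_le_tsum _ ((Sw_summable u hx).sub (Sw_summable u hy))
    ((geom_summable hx).sub (geom_summable hy))
  intro k
  rw [inv_mul_pow hx, inv_mul_pow hy]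
  have hA : (0:ℝ) < x ^ (k+1) := by positivity
  have hB : (0:ℝ) < y ^ (k+1) := by positivity
  have hAB : x ^ (k+1) ≤ y ^ (k+1) := pow_le_pow_left₀ (by linarith) hxy.le _
  have h1 : (0:ℝ) ≤ 1 / x ^ (k+1) - 1 / y ^ (k+1) := by
    rw [sub_nonneg]
    exact one_div_le_one_div_of_le hA hAB
  have hc0 : (0:ℝ) ≤ (if u k then (1:ℝ) else 0) := by split_ifs <;> norm_num
  have hc1 : (if u k then (1:ℝ) else 0) ≤ 1 := by split_ifs <;> norm_num
  calc (if u k then (1:ℝ) else 0) / x ^ (k+1) - (if u k then (1:ℝ) else 0) / y ^ (k+1)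
      = (if u k then (1:ℝ) else 0) * (1 / x ^ (k+1) - 1 / y ^ (k+1)) := by ring
    _ ≤ 1 * (1 / x ^ (k+1) - 1 / y ^ (k+1)) := mul_le_mul_of_nonneg_right hc1 h1
    _ = 1 / x ^ (k+1) - 1 / y ^ (k+1) := by ring

lemma Sw_key (u : ℕ → Bool) {x y : ℝ} (hx : 1 < x) (hxy : x < y) :
    (Sw u x - Sw u y) * ((x - 1) * (y - 1)) ≤ y - x := by
  have hy : 1 < y := hx.trans hxy
  have hx0 : x - 1 ≠ 0 := by intro h; nlinarith
  have hy0 : y - 1 ≠ 0 := by intro h; nlinarith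
  have h := Sw_diff_le u hx hxy
  have h2 : 1 / (x - 1) - 1 / (y - 1) = (y - x) / ((x - 1) * (y - 1)) := by
    field_simp
    ring
  rw [h2] at h
  exact (le_div_iff₀ (by nlinarith)).mp h

/-- Key inequality: with `F x = (x-1)(1 + S x)`,
`(F y - F x)(x-1) ≥ (y - x)(F x - 1)` for `1 < x < y`. -/
lemma F_diff (u : ℕ → Bool) {x y : ℝ} (hx : 1 < x) (hxy : x < y) :
    (y - x) * ((x - 1) * (1 + Sw u x) - 1) ≤
      ((y - 1) * (1 + Sw u y) - (x - 1) * (1 + Sw u x)) * (x - 1) := by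
  have hkey := Sw_key u hx hxy
  nlinarith [hkey]

lemma Sw_continuousOn (u : ℕ → Bool) {a b : ℝ} (ha : 1 < a) :
    ContinuousOn (Sw u) (Set.Icc a b) := by
  have ha0 : (0:ℝ) < a - 1 := by linarith
  have hC : (0:ℝ) ≤ ((a-1)*(a-1))⁻¹ := by positivity
  apply LipschitzOnWith.continuousOn (K := Real.toNNReal (((a-1)*(a-1))⁻¹))
  apply LipschitzOnWith.of_dist_le_mul
  have main : ∀ x ∈ Set.Icc a b, ∀ y ∈ Set.Icc a b, x ≤ y →
      |Sw u x - Sw u y| ≤ ((a-1)*(a-1))⁻¹ * |x - y| := by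
    intro x hx y hy hxy
    rcases eq_or_lt_of_le hxy with rfl | hlt
    · simp
    have hx1 : 1 < x := lt_of_lt_of_le ha hx.1
    have hy1 : 1 < y := lt_of_lt_of_le ha hy.1
    have hd0 : 0 ≤ Sw u x - Sw u y := by linarith [Sw_anti u hx1 hlt]
    have hkey := Sw_key u hx1 hlt
    have hprod : (a-1)*(a-1) ≤ (x-1)*(y-1) := by nlinarith [hx.1, hy.1]
    have hpos : (0:ℝ) < (a-1)*(a-1) := by nlinarith
    rw [abs_of_nonneg hd0, abs_of_nonpos (by linarith : x - y ≤ 0)]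
    rw [← div_eq_inv_mul, le_div_iff₀ hpos]
    calc (Sw u x - Sw u y) * ((a-1)*(a-1)) ≤ (Sw u x - Sw u y) * ((x-1)*(y-1)) := by
            nlinarith [mul_le_mul_of_nonneg_left hprod hd0]
      _ ≤ y - x := hkey
      _ = -(x - y) := by ring
  intro x hx y hy
  rw [Real.dist_eq, Real.dist_eq, Real.coe_toNNReal _ hC]
  rcases le_total x y with h | h
  · exact main x hx y hy h
  · rw [abs_sub_comm (Sw u x), abs_sub_comm x]
    exact main y hy x hx h

/-- Any solution of the equation has `F x = m`. -/
lemma sol_eq (u : ℕ → Bool) {m x : ℝ} (hx : 1 < x)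
    (h : m / (x - 1) = 1 + Sw u x) : (x - 1) * (1 + Sw u x) = m := by
  have hx0 : x - 1 ≠ 0 := by intro h'; nlinarith
  rw [div_eq_iff hx0] at h
  linarith [h]

/-- Solutions are unique, and monotone in `m`. -/
lemma sol_unique (u : ℕ → Bool) {m m' x y : ℝ} (hm : 1 < m)
    (hx : 1 < x) (hy : 1 < y)
    (hex : (x - 1) * (1 + Sw u x) = m) (hey : (y - 1) * (1 + Sw u y) = m')
    (hmm : m ≤ m') : ¬ y < x := by
  intro hlt
  have h := F_diff u hy hlt
  rw [hex, hey] at h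
  nlinarith [h]

/-- with u = σ(1^ω), for each m > 1 there is a unique g_σ(m) > 1 with
m/(g_σ(m)−1) = 1 + Σ_{k≥0} u_k g_σ(m)^{-(k+1)}, and g_σ is strictly increasing. -/
theorem stmt_11 (hs : List ℕ) :
    (∀ m : ℝ, 1 < m → ∃! x : ℝ, 1 < x ∧
      m / (x - 1) = 1 + ∑' k : ℕ, (if applyComp hs onesW k then (1 : ℝ) else 0) / x ^ (k + 1)) ∧
    (∀ g : ℝ → ℝ,
      (∀ m : ℝ, 1 < m → 1 < g m ∧
        m / (g m - 1) = 1 + ∑' k : ℕ,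
          (if applyComp hs onesW k then (1 : ℝ) else 0) / (g m) ^ (k + 1)) →
      StrictMonoOn g (Set.Ioi 1)) := by
  set u : ℕ → Bool := applyComp hs onesW with hu
  constructor
  · intro m hm
    -- existence via IVT on [ (1+m)/2, m+1 ]
    set a : ℝ := (1 + m) / 2 with hadef
    set b : ℝ := m + 1 with hbdef
    have ha1 : 1 < a := by rw [hadef]; linarith
    have hb1 : 1 < b := by rw [hbdef]; linarith
    have hab : a ≤ b := by rw [hadef, hbdef]; linarith
    have hcont : ContinuousOn (fun x => (x - 1) * (1 + Sw u x)) (Set.Icc a b) :=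
      ((continuousOn_id.sub continuousOn_const).mul
        (continuousOn_const.add (Sw_continuousOn u ha1)))
    have hFa : (a - 1) * (1 + Sw u a) ≤ m := by
      have h1 : Sw u a ≤ 1 / (a - 1) := Sw_le u ha1
      have h2 : (Sw u a) * (a - 1) ≤ 1 := (le_div_iff₀ (by linarith)).mp h1
      have ham : a < m := by rw [hadef]; linarith
      nlinarith [h2]
    have hFb : m ≤ (b - 1) * (1 + Sw u b) := by
      have h1 := Sw_nonneg u hb1
      rw [hbdef]; nlinarith [h1]
    obtain ⟨x, hxmem, hFx⟩ := intermediate_value_Icc hab hcont ⟨hFa, hFb⟩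
    have hx1 : 1 < x := lt_of_lt_of_le ha1 hxmem.1
    have hx0 : x - 1 ≠ 0 := by intro h'; nlinarith
    refine ⟨x, ⟨hx1, ?_⟩, ?_⟩
    · show m / (x - 1) = 1 + Sw u x
      rw [div_eq_iff hx0]
      simp only at hFx
      linarith [hFx]
    · rintro y ⟨hy1, hyeq⟩
      have hey : (y - 1) * (1 + Sw u y) = m := sol_eq u hy1 hyeq
      have hex : (x - 1) * (1 + Sw u x) = m := by simpa using hFx
      rcases lt_trichotomy y x with h | h | h
      · exact absurd h (sol_unique u hm hx1 hy1 hex hey le_rfl)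
      · exact h
      · exact absurd h (sol_unique u hm hy1 hx1 hey hex le_rfl)
  · intro g hg
    intro p hp q hq hpq
    simp only [Set.mem_Ioi] at hp hq
    obtain ⟨hgp, heqp⟩ := hg p hp
    obtain ⟨hgq, heqq⟩ := hg q hq
    have hep : (g p - 1) * (1 + Sw u (g p)) = p := sol_eq u hgp heqp
    have heq : (g q - 1) * (1 + Sw u (g q)) = q := sol_eq u hgq heqq
    rcases lt_trichotomy (g p) (g q) with h | h | h
    · exact h
    · exfalso; rw [h, heq] at hep; linarith
    · exact absurd h (sol_unique u hp hgp hgq hep heq hpq.le)
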